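/- In the ring of Laurent polynomials ℤ[t, t⁻¹], for every integer n ≥ 0, 1 − A_n − B_n + 2·A_n·B_n = Σ_{k=−n}^{n} (−1)^k·(2·(n − |k|) + 1)·t^k, where A_n = Σ_{j=0}^{n} (−t)^j and B_n = Σ_{k=0}^{n} (−t⁻¹)^k. (Up to the overall unit sign (−1)^n, this Laurent polynomial is the Alexander polynomial Δ(t) = Σ_{k=−n}^{n} (−1)^{n+k}(2(n−|k|)+1)t^k of the lemniscate knot L(2n+1, 2, 2), as asserted in Theorem 2 of the paper.) -/

import Mathlib

open LaurentPolynomial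

open Finset in

private lemma icc_sum {M : Type*} [AddCommGroup M] (n : ℕ) (f : ℤ → M) :
    ∑ k ∈ Finset.Icc (-(n:ℤ)) (n:ℤ), f k
      = ∑ j ∈ Finset.range (n+1), f j + ∑ j ∈ Finset.range (n+1), f (-(j:ℤ)) - f 0 := by
  induction n with
  | zero => simp
  | succ n ih =>
    have hset : Finset.Icc (-((n+1:ℕ):ℤ)) ((n+1:ℕ):ℤ)
        = insert (-((n:ℤ)+1)) (insert ((n:ℤ)+1) (Finset.Icc (-(n:ℤ)) (n:ℤ))) := by
      ext k
      simp only [Finset.mem_Icc, Finset.mem_insert]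
      push_cast
      omega
    rw [hset, Finset.sum_insert (by simp only [Finset.mem_insert, Finset.mem_Icc]; omega),
        Finset.sum_insert (by simp only [Finset.mem_Icc]; omega),
        Finset.sum_range_succ (fun j => f (j:ℤ)) (n+1), Finset.sum_range_succ (fun j => f (-(j:ℤ))) (n+1), ih]
    push_cast
    abel

private lemma hunit : (-(T 1 : ℤ[T;T⁻¹])) * (-(T (-1))) = 1 := by
  rw [neg_mul_neg, ← T_add]; norm_num

private lemma aB (n : ℕ) :
    (-(T 1 : ℤ[T;T⁻¹]))^(n+1) * ∑ k ∈ Finset.range (n+1), (-(T (-1) : ℤ[T;T⁻¹]))^k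
      = ∑ k ∈ Finset.range (n+2), (-(T 1 : ℤ[T;T⁻¹]))^k - 1 := by
  rw [Finset.mul_sum, Finset.sum_range_succ' (fun k => (-(T 1 : ℤ[T;T⁻¹]))^k) (n+1)]
  simp only [pow_zero]
  rw [add_sub_cancel_right, ← Finset.sum_range_reflect (fun k => (-(T 1 : ℤ[T;T⁻¹]))^(k+1)) (n+1)]
  apply Finset.sum_congr rfl
  intro k hk
  have hk' : k ≤ n := Nat.lt_succ_iff.mp (Finset.mem_range.mp hk)
  show (-(T 1 : ℤ[T;T⁻¹]))^(n+1) * (-(T (-1)))^k = (-(T 1 : ℤ[T;T⁻¹]))^(n+1-1-k+1)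
  have h2 : n+1-1-k+1 = n+1-k := by omega
  rw [h2]
  conv_lhs => rw [show n+1 = (n+1-k)+k by omega]
  rw [pow_add, mul_assoc, ← mul_pow, hunit, one_pow, mul_one]

private lemma bA (n : ℕ) :
    (-(T (-1) : ℤ[T;T⁻¹]))^(n+1) * ∑ k ∈ Finset.range (n+1), (-(T 1 : ℤ[T;T⁻¹]))^k
      = ∑ k ∈ Finset.range (n+2), (-(T (-1) : ℤ[T;T⁻¹]))^k - 1 := by
  rw [Finset.mul_sum, Finset.sum_range_succ' (fun k => (-(T (-1) : ℤ[T;T⁻¹]))^k) (n+1)]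
  simp only [pow_zero]
  rw [add_sub_cancel_right, ← Finset.sum_range_reflect (fun k => (-(T (-1) : ℤ[T;T⁻¹]))^(k+1)) (n+1)]
  apply Finset.sum_congr rfl
  intro k hk
  have hk' : k ≤ n := Nat.lt_succ_iff.mp (Finset.mem_range.mp hk)
  show (-(T (-1) : ℤ[T;T⁻¹]))^(n+1) * (-(T 1))^k = (-(T (-1) : ℤ[T;T⁻¹]))^(n+1-1-k+1)
  have h2 : n+1-1-k+1 = n+1-k := by omega
  rw [h2]
  conv_lhs => rw [show n+1 = (n+1-k)+k by omega]
  rw [pow_add, mul_assoc, ← mul_pow, mul_comm (-(T (-1) : ℤ[T;T⁻¹])), hunit, one_pow, mul_one]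
private lemma prod_AB (n : ℕ) :
    (∑ j ∈ Finset.range (n+1), (-(T 1 : ℤ[T;T⁻¹]))^j) *
      (∑ k ∈ Finset.range (n+1), (-(T (-1) : ℤ[T;T⁻¹]))^k)
    = (∑ j ∈ Finset.range (n+1), (-(T 1 : ℤ[T;T⁻¹]))^j)
      + (∑ k ∈ Finset.range (n+1), (-(T (-1) : ℤ[T;T⁻¹]))^k)
      - 1 - (n : ℤ[T;T⁻¹])
      + ∑ j ∈ Finset.range (n+1),
          (((n:ℤ) - (j:ℤ) : ℤ) : ℤ[T;T⁻¹]) * ((-(T 1 : ℤ[T;T⁻¹]))^j + (-(T (-1)))^j) := by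
  induction n with
  | zero => simp
  | succ n ih =>
    have hsplit : ∑ j ∈ Finset.range (n+1+1),
        ((((n+1:ℕ):ℤ) - (j:ℤ) : ℤ) : ℤ[T;T⁻¹]) * ((-(T 1 : ℤ[T;T⁻¹]))^j + (-(T (-1)))^j)
        = (∑ j ∈ Finset.range (n+1),
            (((n:ℤ) - (j:ℤ) : ℤ) : ℤ[T;T⁻¹]) * ((-(T 1 : ℤ[T;T⁻¹]))^j + (-(T (-1)))^j))
          + ((∑ j ∈ Finset.range (n+1), (-(T 1 : ℤ[T;T⁻¹]))^j)
             + (∑ k ∈ Finset.range (n+1), (-(T (-1) : ℤ[T;T⁻¹]))^k)) := by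
      rw [Finset.sum_range_succ]
      have h0 : ((((n+1:ℕ):ℤ) - ((n+1:ℕ):ℤ) : ℤ) : ℤ[T;T⁻¹]) = 0 := by push_cast; ring
      rw [h0, zero_mul, add_zero, ← Finset.sum_add_distrib, ← Finset.sum_add_distrib]
      apply Finset.sum_congr rfl
      intro j _
      push_cast
      ring
    have hA := aB n
    rw [Finset.sum_range_succ (fun k => (-(T 1 : ℤ[T;T⁻¹]))^k) (n+1)] at hA
    have hB := bA n
    rw [Finset.sum_range_succ (fun k => (-(T (-1) : ℤ[T;T⁻¹]))^k) (n+1)] at hB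
    have hab : (-(T 1 : ℤ[T;T⁻¹]))^(n+1) * (-(T (-1)))^(n+1) = 1 := by
      rw [← mul_pow, hunit, one_pow]
    rw [Finset.sum_range_succ (fun j => (-(T 1 : ℤ[T;T⁻¹]))^j) (n+1),
        Finset.sum_range_succ (fun k => (-(T (-1) : ℤ[T;T⁻¹]))^k) (n+1), hsplit]
    push_cast
    push_cast at ih
    linear_combination ih + hA + hB + hab

/-- In `ℤ[t,t⁻¹]`, with `A_n = Σ_{j=0}^n (−t)^j` and `B_n = Σ_{k=0}^n (−t⁻¹)^k`,
`1 − A_n − B_n + 2·A_n·B_n = Σ_{k=−n}^{n} (−1)^k·(2(n−|k|)+1)·t^k`, which up to a unit is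
the Alexander polynomial of the lemniscate knot `L(2n+1, 2, 2)`. -/
theorem alexander_polynomial_figure_eight_family (n : ℕ) :
    (1 : ℤ[T;T⁻¹]) - (∑ j ∈ Finset.range (n + 1), (-(T 1 : ℤ[T;T⁻¹])) ^ j)
      - (∑ k ∈ Finset.range (n + 1), (-(T (-1) : ℤ[T;T⁻¹])) ^ k)
      + 2 * (∑ j ∈ Finset.range (n + 1), (-(T 1 : ℤ[T;T⁻¹])) ^ j) *
          (∑ k ∈ Finset.range (n + 1), (-(T (-1) : ℤ[T;T⁻¹])) ^ k) =
    ∑ k ∈ Finset.Icc (-(n : ℤ)) (n : ℤ),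
      ((((Int.negOnePow k : ℤˣ) : ℤ) * (2 * ((n : ℤ) - |k|) + 1) : ℤ) : ℤ[T;T⁻¹]) * T k := by
  have hT1 : ∀ j : ℕ, (-(T 1 : ℤ[T;T⁻¹]))^j = ((((-1)^j : ℤ)) : ℤ[T;T⁻¹]) * T (j:ℤ) := by
    intro j
    have h : (-(T 1 : ℤ[T;T⁻¹]))^j = (-1)^j * (T 1)^j := neg_pow _ _
    rw [T_pow, mul_one] at h
    rw [h]
    push_cast
    ring
  have hT2 : ∀ j : ℕ, (-(T (-1) : ℤ[T;T⁻¹]))^j = ((((-1)^j : ℤ)) : ℤ[T;T⁻¹]) * T (-(j:ℤ)) := by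
    intro j
    have h : (-(T (-1) : ℤ[T;T⁻¹]))^j = (-1)^j * (T (-1))^j := neg_pow _ _
    rw [T_pow] at h
    rw [h, mul_neg_one]
    push_cast
    ring
  rw [icc_sum n (fun k => ((((Int.negOnePow k : ℤˣ) : ℤ) * (2 * ((n : ℤ) - |k|) + 1) : ℤ) : ℤ[T;T⁻¹]) * T k)]
  have e1 : ∑ j ∈ Finset.range (n+1),
      ((((Int.negOnePow (j:ℤ) : ℤˣ) : ℤ) * (2 * ((n : ℤ) - |(j:ℤ)|) + 1) : ℤ) : ℤ[T;T⁻¹]) * T (j:ℤ)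
      = 2 * (∑ j ∈ Finset.range (n+1),
          (((n:ℤ) - (j:ℤ) : ℤ) : ℤ[T;T⁻¹]) * (-(T 1 : ℤ[T;T⁻¹]))^j)
        + ∑ j ∈ Finset.range (n+1), (-(T 1 : ℤ[T;T⁻¹]))^j := by
    rw [Finset.mul_sum, ← Finset.sum_add_distrib]
    apply Finset.sum_congr rfl
    intro j _
    rw [hT1 j, Int.coe_negOnePow_natCast, Nat.abs_cast]
    push_cast
    ring
  have e2 : ∑ j ∈ Finset.range (n+1),
      ((((Int.negOnePow (-(j:ℤ)) : ℤˣ) : ℤ) * (2 * ((n : ℤ) - |(-(j:ℤ))|) + 1) : ℤ) : ℤ[T;T⁻¹]) * T (-(j:ℤ))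
      = 2 * (∑ j ∈ Finset.range (n+1),
          (((n:ℤ) - (j:ℤ) : ℤ) : ℤ[T;T⁻¹]) * (-(T (-1) : ℤ[T;T⁻¹]))^j)
        + ∑ j ∈ Finset.range (n+1), (-(T (-1) : ℤ[T;T⁻¹]))^j := by
    rw [Finset.mul_sum, ← Finset.sum_add_distrib]
    apply Finset.sum_congr rfl
    intro j _
    rw [hT2 j, Int.negOnePow_neg, Int.coe_negOnePow_natCast, abs_neg, Nat.abs_cast]
    push_cast
    ring
  have e0 : ((((Int.negOnePow (0:ℤ) : ℤˣ) : ℤ) * (2 * ((n : ℤ) - |(0:ℤ)|) + 1) : ℤ) : ℤ[T;T⁻¹]) * T (0:ℤ)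
      = 2 * (n : ℤ[T;T⁻¹]) + 1 := by
    rw [Int.negOnePow_zero, abs_zero, T_zero]
    push_cast
    ring
  have hS : ∑ j ∈ Finset.range (n+1),
      (((n:ℤ) - (j:ℤ) : ℤ) : ℤ[T;T⁻¹]) * ((-(T 1 : ℤ[T;T⁻¹]))^j + (-(T (-1)))^j)
      = (∑ j ∈ Finset.range (n+1), (((n:ℤ) - (j:ℤ) : ℤ) : ℤ[T;T⁻¹]) * (-(T 1 : ℤ[T;T⁻¹]))^j)
        + ∑ j ∈ Finset.range (n+1), (((n:ℤ) - (j:ℤ) : ℤ) : ℤ[T;T⁻¹]) * (-(T (-1) : ℤ[T;T⁻¹]))^j := by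
    rw [← Finset.sum_add_distrib]
    apply Finset.sum_congr rfl
    intro j _
    ring
  rw [e1, e2, e0]
  linear_combination 2 * prod_AB n + 2 * hS
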